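/- Let 𝒞 be a conic in the real projective plane, given as the zero locus of a nondegenerate quadratic form on ℝ³. Let A, B, C and A', B', C' be two triangles inscribed in 𝒞 (all six points on 𝒞, A, B, C not collinear, A', B', C' not collinear, and the six points pairwise distinct). Suppose ABC is perspective with A'B'C' with perspector P (the lines AA', BB', CC' all pass through P) and ABC is perspective with B'C'A' with perspector Q (the lines AB', BC', CA' all pass through Q), with P ≠ Q. Then there exists a point R on the line PQ such that ABC is perspective with C'A'B' with perspector R (the lines AC', BA', CB' all pass through R). -/

import Mathlib

/-- Three points of the real projective plane are collinear if (some, equivalently any)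
homogeneous representatives of them are linearly dependent. -/
def Collin (X Y Z : Projectivization ℝ (Fin 3 → ℝ)) : Prop :=
  ¬ LinearIndependent ℝ ![X.rep, Y.rep, Z.rep]

/-- A point of the real projective plane lies on the conic cut out by the quadratic form `q`. -/
def OnConic (q : QuadraticForm ℝ (Fin 3 → ℝ)) (X : Projectivization ℝ (Fin 3 → ℝ)) : Prop :=
  q X.rep = 0

private lemma notLI_iff_det (v : Fin 3 → Fin 3 → ℝ) :
    ¬ LinearIndependent ℝ v ↔ (Matrix.of v).det = 0 := by
  rw [show LinearIndependent ℝ v ↔ IsUnit (Matrix.of v) from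
      Matrix.linearIndependent_rows_iff_isUnit,
    Matrix.isUnit_iff_isUnit_det, isUnit_iff_ne_zero, not_not]

open Projectivization in
private lemma proj_eq_of_smul {X Y : Projectivization ℝ (Fin 3 → ℝ)} {t : ℝ}
    (h : X.rep = t • Y.rep) : X = Y := by
  have ht : t ≠ 0 := by
    rintro rfl
    rw [zero_smul] at h
    exact X.rep_nonzero h
  conv_lhs => rw [← X.mk_rep]
  conv_rhs => rw [← Y.mk_rep]
  rw [Projectivization.mk_eq_mk_iff']
  exact ⟨t, h.symm⟩

private lemma collin_iff (b : Module.Basis (Fin 3) ℝ (Fin 3 → ℝ))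
    (X Y Z : Projectivization ℝ (Fin 3 → ℝ)) :
    Collin X Y Z ↔
      b.equivFun X.rep 0 * (b.equivFun Y.rep 1 * b.equivFun Z.rep 2)
      - b.equivFun X.rep 0 * (b.equivFun Y.rep 2 * b.equivFun Z.rep 1)
      - b.equivFun X.rep 1 * (b.equivFun Y.rep 0 * b.equivFun Z.rep 2)
      + b.equivFun X.rep 1 * (b.equivFun Y.rep 2 * b.equivFun Z.rep 0)
      + b.equivFun X.rep 2 * (b.equivFun Y.rep 0 * b.equivFun Z.rep 1)
      - b.equivFun X.rep 2 * (b.equivFun Y.rep 1 * b.equivFun Z.rep 0) = 0 := by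
  rw [Collin]
  have hcomp : ![b.equivFun X.rep, b.equivFun Y.rep, b.equivFun Z.rep]
      = ⇑b.equivFun.toLinearMap ∘ ![X.rep, Y.rep, Z.rep] := by
    funext i; fin_cases i <;> rfl
  have hli : LinearIndependent ℝ ![b.equivFun X.rep, b.equivFun Y.rep, b.equivFun Z.rep]
      ↔ LinearIndependent ℝ ![X.rep, Y.rep, Z.rep] := by
    rw [hcomp]
    exact LinearMap.linearIndependent_iff b.equivFun.toLinearMap b.equivFun.ker
  rw [← hli, notLI_iff_det, Matrix.det_fin_three]
  simp only [Matrix.of_apply, Matrix.cons_val_zero, Matrix.cons_val_one, Matrix.head_cons,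
    Matrix.cons_val_two, Matrix.tail_cons]
  constructor <;> intro h <;> linear_combination h

private lemma core_H (u v w x1 y1 z1 x2 y2 z2 x3 y3 z3 : ℝ)
    (hv : v ≠ 0)
    (hx1 : x1 ≠ 0) (hy1 : y1 ≠ 0) (hz1 : z1 ≠ 0)
    (hx2 : x2 ≠ 0) (hy2 : y2 ≠ 0) (hz2 : z2 ≠ 0)
    (hx3 : x3 ≠ 0) (hy3 : y3 ≠ 0) (hz3 : z3 ≠ 0)
    (hc1 : u*(y1*z1) + v*(x1*z1) + w*(x1*y1) = 0)
    (hc2 : u*(y2*z2) + v*(x2*z2) + w*(x2*y2) = 0)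
    (hc3 : u*(y3*z3) + v*(x3*z3) + w*(x3*y3) = 0)
    (he1 : x3*y1*z2 - x2*y3*z1 = 0) (he2 : x1*y2*z3 - x3*y1*z2 = 0) :
    y1*z2^2*z3*(x3*z1-x1*z3) + y2*z1*z3^2*(x1*z2-x2*z1) + y3*z1^2*z2*(x2*z3-x3*z2) = 0 := by
  have hd1 : u*z1 + w*x1 ≠ 0 := by
    intro hz
    have h1 : y1*(u*z1+w*x1) = -(v*(x1*z1)) := by linear_combination hc1
    rw [hz, mul_zero] at h1
    exact mul_ne_zero hv (mul_ne_zero hx1 hz1) (by linarith)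
  have hd2 : u*z2 + w*x2 ≠ 0 := by
    intro hz
    have h1 : y2*(u*z2+w*x2) = -(v*(x2*z2)) := by linear_combination hc2
    rw [hz, mul_zero] at h1
    exact mul_ne_zero hv (mul_ne_zero hx2 hz2) (by linarith)
  have hd3 : u*z3 + w*x3 ≠ 0 := by
    intro hz
    have h1 : y3*(u*z3+w*x3) = -(v*(x3*z3)) := by linear_combination hc3
    rw [hz, mul_zero] at h1
    exact mul_ne_zero hv (mul_ne_zero hx3 hz3) (by linarith)
  have hG1 : u*z3*(x1*z2-x2*z1) - w*x1*(x2*z3-x3*z2) = 0 := by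
    have h : (y1*y3) * (u*z3*(x1*z2-x2*z1) - w*x1*(x2*z3-x3*z2)) = (y1*y3) * 0 := by
      linear_combination (x1*z2*y1)*hc3 - (x2*z3*y3)*hc1 - (v*x1*z3)*he1
    exact mul_left_cancel₀ (mul_ne_zero hy1 hy3) h
  have hG2 : u*z1*(x2*z3-x3*z2) - w*x2*(x3*z1-x1*z3) = 0 := by
    have h : (y1*y2) * (u*z1*(x2*z3-x3*z2) - w*x2*(x3*z1-x1*z3)) = (y1*y2) * 0 := by
      linear_combination (x2*z3*y2)*hc1 - (x3*z1*y1)*hc2 - (v*x2*z1)*he2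
    exact mul_left_cancel₀ (mul_ne_zero hy1 hy2) h
  have hG3 : u*z2*(x3*z1-x1*z3) - w*x3*(x1*z2-x2*z1) = 0 := by
    linear_combination - hG1 - hG2
  have h : (y1*z2^2*z3*(x3*z1-x1*z3) + y2*z1*z3^2*(x1*z2-x2*z1) + y3*z1^2*z2*(x2*z3-x3*z2))
      * ((u*z1+w*x1)*((u*z2+w*x2)*(u*z3+w*x3))) = 0 := by
    linear_combination (z2^2*z3*(x3*z1-x1*z3)*((u*z2+w*x2)*(u*z3+w*x3)))*hc1
      + (z1*z3^2*(x1*z2-x2*z1)*((u*z1+w*x1)*(u*z3+w*x3)))*hc2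
      + (z1^2*z2*(x2*z3-x3*z2)*((u*z1+w*x1)*(u*z2+w*x2)))*hc3
      - (u*v*z1*z2*z3*(x2*z1*z3))*hG1 - (u*v*z1*z2*z3*(x3*z1*z2))*hG2
      - (u*v*z1*z2*z3*(x1*z2*z3))*hG3
  exact (mul_eq_zero.mp h).resolve_right
    (mul_ne_zero hd1 (mul_ne_zero hd2 hd3))

private lemma prop_of (u v w x1 y1 z1 x2 y2 z2 : ℝ) (hv : v ≠ 0)
    (hx1 : x1 ≠ 0) (hz1 : z1 ≠ 0) (hx2 : x2 ≠ 0) (hz2 : z2 ≠ 0)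
    (hc1 : u*(y1*z1) + v*(x1*z1) + w*(x1*y1) = 0)
    (hc2 : u*(y2*z2) + v*(x2*z2) + w*(x2*y2) = 0)
    (hp0 : x1*z2 - x2*z1 = 0) : x1*y2 - x2*y1 = 0 := by
  have hd1 : u*z1 + w*x1 ≠ 0 := by
    intro hz
    have h1 : y1*(u*z1+w*x1) = -(v*(x1*z1)) := by linear_combination hc1
    rw [hz, mul_zero] at h1
    exact mul_ne_zero hv (mul_ne_zero hx1 hz1) (by linarith)
  have hd2 : u*z2 + w*x2 ≠ 0 := by
    intro hz
    have h1 : y2*(u*z2+w*x2) = -(v*(x2*z2)) := by linear_combination hc2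
    rw [hz, mul_zero] at h1
    exact mul_ne_zero hv (mul_ne_zero hx2 hz2) (by linarith)
  have h : (x1*y2 - x2*y1) * ((u*z1+w*x1)*(u*z2+w*x2)) = 0 := by
    linear_combination (x1*(u*z1+w*x1))*hc2 - (x2*(u*z2+w*x2))*hc1 - (v*w*x1*x2)*hp0
  exact (mul_eq_zero.mp h).resolve_right (mul_ne_zero hd1 hd2)

private lemma master (u v w x1 y1 z1 x2 y2 z2 x3 y3 z3 p0 p1 p2 q0 q1 q2 : ℝ)
    (hv : v ≠ 0)
    (hx1 : x1 ≠ 0) (hy1 : y1 ≠ 0) (hz1 : z1 ≠ 0)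
    (hx2 : x2 ≠ 0) (hy2 : y2 ≠ 0) (hz2 : z2 ≠ 0)
    (hx3 : x3 ≠ 0) (hy3 : y3 ≠ 0) (hz3 : z3 ≠ 0)
    (hpv : ¬ (p0 = 0 ∧ p1 = 0 ∧ p2 = 0)) (hqv : ¬ (q0 = 0 ∧ q1 = 0 ∧ q2 = 0))
    (hc1 : u*(y1*z1) + v*(x1*z1) + w*(x1*y1) = 0)
    (hc2 : u*(y2*z2) + v*(x2*z2) + w*(x2*y2) = 0)
    (hc3 : u*(y3*z3) + v*(x3*z3) + w*(x3*y3) = 0)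
    (hP1 : y1*p2 - z1*p1 = 0) (hP2 : z2*p0 - x2*p2 = 0) (hP3 : x3*p1 - y3*p0 = 0)
    (hQ1 : y2*q2 - z2*q1 = 0) (hQ2 : z3*q0 - x3*q2 = 0) (hQ3 : x1*q1 - y1*q0 = 0) :
    (x3*y1*z2 - x2*y3*z1 = 0) ∧ (x1*y2*z3 - x3*y1*z2 = 0) ∧ p0 ≠ 0 ∧ q0 ≠ 0 ∧
    ((z2*z3*(x3*z1-x1*z3)*(x2*z1)*q0) * p0 + (z1*z3*(x1*z2-x2*z1)*(x3*z2)*p0) * q0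
      + (z1*z2*(x2*z3-x3*z2)*p0*q0) * (x1*z3) = 0) ∧
    ((z2*z3*(x3*z1-x1*z3)*(x2*z1)*q0) * p1 + (z1*z3*(x1*z2-x2*z1)*(x3*z2)*p0) * q1
      + (z1*z2*(x2*z3-x3*z2)*p0*q0) * (y3*z1) = 0) ∧
    ((z2*z3*(x3*z1-x1*z3)*(x2*z1)*q0) * p2 + (z1*z3*(x1*z2-x2*z1)*(x3*z2)*p0) * q2
      + (z1*z2*(x2*z3-x3*z2)*p0*q0) * (z3*z1) = 0) := by
  have hp0 : p0 ≠ 0 := by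
    intro h0
    apply hpv
    have h1 : p1 = 0 := by
      have h := hP3; rw [h0] at h
      have h' : x3 * p1 = 0 := by linarith
      exact (mul_eq_zero.mp h').resolve_left hx3
    have h2 : p2 = 0 := by
      have h := hP1; rw [h1] at h
      have h' : y1 * p2 = 0 := by linarith
      exact (mul_eq_zero.mp h').resolve_left hy1
    exact ⟨h0, h1, h2⟩
  have hq0 : q0 ≠ 0 := by
    intro h0
    apply hqv
    have h1 : q1 = 0 := by
      have h := hQ3; rw [h0] at h
      have h' : x1 * q1 = 0 := by linarith
      exact (mul_eq_zero.mp h').resolve_left hx1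
    have h2 : q2 = 0 := by
      have h := hQ1; rw [h1] at h
      have h' : y2 * q2 = 0 := by linarith
      exact (mul_eq_zero.mp h').resolve_left hy2
    exact ⟨h0, h1, h2⟩
  have he1 : x3*y1*z2 - x2*y3*z1 = 0 := by
    have h : (x3*y1*z2 - x2*y3*z1) * p0 = 0 := by
      linear_combination (x3*y1)*hP2 + (x2*x3)*hP1 + (x2*z1)*hP3
    exact (mul_eq_zero.mp h).resolve_right hp0
  have he2 : x1*y2*z3 - x3*y1*z2 = 0 := by
    have h : (x1*y2*z3 - x3*y1*z2) * q0 = 0 := by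
      linear_combination (x1*y2)*hQ2 + (x1*x3)*hQ1 + (x3*z2)*hQ3
    exact (mul_eq_zero.mp h).resolve_right hq0
  have hH := core_H u v w x1 y1 z1 x2 y2 z2 x3 y3 z3 hv hx1 hy1 hz1 hx2 hy2 hz2
    hx3 hy3 hz3 hc1 hc2 hc3 he1 he2
  refine ⟨he1, he2, hp0, hq0, by ring, ?_, ?_⟩
  · have h : ((z2*z3*(x3*z1-x1*z3)*(x2*z1)*q0) * p1 + (z1*z3*(x1*z2-x2*z1)*(x3*z2)*p0) * q1
        + (z1*z2*(x2*z3-x3*z2)*p0*q0) * (y3*z1)) * (x1*x3) = 0 := by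
      linear_combination (x1*z2*z3*(x3*z1-x1*z3)*x2*z1*q0)*hP3
        + (x3^2*z1*z2*z3*(x1*z2-x2*z1)*p0)*hQ3
        + (p0*q0*x1*x3)*hH
        - (p0*q0*x1*z2*z3*(x3*z1-x1*z3))*he1
        - (p0*q0*x3*z1*z3*(x1*z2-x2*z1))*he2
    exact (mul_eq_zero.mp h).resolve_right (mul_ne_zero hx1 hx3)
  · have h : ((z2*z3*(x3*z1-x1*z3)*(x2*z1)*q0) * p2 + (z1*z3*(x1*z2-x2*z1)*(x3*z2)*p0) * q2
        + (z1*z2*(x2*z3-x3*z2)*p0*q0) * (z3*z1)) * (x2*x3) = 0 := by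
      linear_combination - (x2*x3*z1*z2*z3*(x3*z1-x1*z3)*q0)*hP2
        - (x2*x3*z1*z2*z3*(x1*z2-x2*z1)*p0)*hQ2
    exact (mul_eq_zero.mp h).resolve_right (mul_ne_zero hx2 hx3)

theorem doubly_perspective_implies_triply_perspective
    (q : QuadraticForm ℝ (Fin 3 → ℝ))
    (hq : LinearMap.BilinForm.Nondegenerate (QuadraticMap.polarBilin q))
    (A B C A' B' C' : Projectivization ℝ (Fin 3 → ℝ))
    (hA : OnConic q A) (hB : OnConic q B) (hC : OnConic q C)
    (hA' : OnConic q A') (hB' : OnConic q B') (hC' : OnConic q C')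
    (hABC : ¬ Collin A B C) (hA'B'C' : ¬ Collin A' B' C')
    (hdistinct : List.Pairwise (· ≠ ·) [A, B, C, A', B', C'])
    (P Q : Projectivization ℝ (Fin 3 → ℝ)) (hPQ : P ≠ Q)
    (hP : Collin A A' P ∧ Collin B B' P ∧ Collin C C' P)
    (hQ : Collin A B' Q ∧ Collin B C' Q ∧ Collin C A' Q) :
    ∃ R : Projectivization ℝ (Fin 3 → ℝ),
      Collin P Q R ∧ Collin A C' R ∧ Collin B A' R ∧ Collin C B' R := by
  obtain ⟨hP1, hP2, hP3⟩ := hP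
  obtain ⟨hQ1, hQ2, hQ3⟩ := hQ
  obtain ⟨hAne, hd1⟩ := List.pairwise_cons.mp hdistinct
  obtain ⟨hBne, hd2⟩ := List.pairwise_cons.mp hd1
  obtain ⟨hCne, hd3⟩ := List.pairwise_cons.mp hd2
  obtain ⟨hA'ne, -⟩ := List.pairwise_cons.mp hd3
  have hA'B' : A' ≠ B' := hA'ne B' (by simp)
  have hli : LinearIndependent ℝ ![A.rep, B.rep, C.rep] := not_not.mp hABC
  have hcard : Fintype.card (Fin 3) = Module.finrank ℝ (Fin 3 → ℝ) := by simp
  let b : Module.Basis (Fin 3) ℝ (Fin 3 → ℝ) := basisOfLinearIndependentOfCardEqFinrank hli hcard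
  have hb : ⇑b = ![A.rep, B.rep, C.rep] := coe_basisOfLinearIndependentOfCardEqFinrank hli hcard
  have hbA : b 0 = A.rep := (congrFun hb 0).trans rfl
  have hbB : b 1 = B.rep := (congrFun hb 1).trans rfl
  have hbC : b 2 = C.rep := (congrFun hb 2).trans rfl
  have repr' : ∀ m : Fin 3 → ℝ,
      m = b.equivFun m 0 • A.rep + b.equivFun m 1 • B.rep + b.equivFun m 2 • C.rep := by
    intro m
    have h := b.sum_equivFun m
    rw [Fin.sum_univ_three, hbA, hbB, hbC] at h
    exact h.symm
  have sA : b.equivFun A.rep = ![1,0,0] := by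
    funext j
    rw [← hbA, Module.Basis.equivFun_self]
    fin_cases j <;> simp
  have sB : b.equivFun B.rep = ![0,1,0] := by
    funext j
    rw [← hbB, Module.Basis.equivFun_self]
    fin_cases j <;> simp
  have sC : b.equivFun C.rep = ![0,0,1] := by
    funext j
    rw [← hbC, Module.Basis.equivFun_self]
    fin_cases j <;> simp
  have qA : q A.rep = 0 := hA
  have qB : q B.rep = 0 := hB
  have qC : q C.rep = 0 := hC
  have qexp : ∀ m : Fin 3 → ℝ, q m =
      QuadraticMap.polar q B.rep C.rep * (b.equivFun m 1 * b.equivFun m 2)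
      + QuadraticMap.polar q A.rep C.rep * (b.equivFun m 0 * b.equivFun m 2)
      + QuadraticMap.polar q A.rep B.rep * (b.equivFun m 0 * b.equivFun m 1) := by
    intro m
    conv_lhs => rw [repr' m]
    rw [QuadraticMap.map_add q _ (b.equivFun m 2 • C.rep),
      QuadraticMap.map_add q (b.equivFun m 0 • A.rep) (b.equivFun m 1 • B.rep),
      QuadraticMap.polar_add_left]
    simp only [QuadraticMap.map_smul, QuadraticMap.polar_smul_left,
      QuadraticMap.polar_smul_right, qA, qB, qC, smul_eq_mul]
    ring
  -- polar value lemmas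
  have polAA : QuadraticMap.polar q A.rep A.rep = 0 := by
    rw [QuadraticMap.polar_self, qA]; simp
  have polBB : QuadraticMap.polar q B.rep B.rep = 0 := by
    rw [QuadraticMap.polar_self, qB]; simp
  have polCC : QuadraticMap.polar q C.rep C.rep = 0 := by
    rw [QuadraticMap.polar_self, qC]; simp
  have keyN : ∀ m : Fin 3 → ℝ, QuadraticMap.polar q m A.rep = 0 →
      QuadraticMap.polar q m B.rep = 0 → QuadraticMap.polar q m C.rep = 0 → m = 0 := by
    intro m h1 h2 h3
    apply hq.1 m
    intro n
    rw [QuadraticMap.polarBilin_apply_apply]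
    conv_lhs => rw [repr' n]
    rw [QuadraticMap.polar_add_right, QuadraticMap.polar_add_right,
      QuadraticMap.polar_smul_right, QuadraticMap.polar_smul_right,
      QuadraticMap.polar_smul_right, h1, h2, h3]
    simp
  have coefzero : ∀ r s t : ℝ, r • A.rep + s • B.rep + t • C.rep = 0 → r = 0 ∧ s = 0 ∧ t = 0 := by
    intro r s t h
    have hsum : ∑ i : Fin 3, (![r, s, t] : Fin 3 → ℝ) i • ![A.rep, B.rep, C.rep] i = 0 := by
      rw [Fin.sum_univ_three]
      simpa using h
    have h' := Fintype.linearIndependent_iff.mp hli ![r, s, t] hsum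
    exact ⟨by simpa using h' 0, by simpa using h' 1, by simpa using h' 2⟩
  have hcu : QuadraticMap.polar q B.rep C.rep ≠ 0 := by
    intro h0
    have hs1 : QuadraticMap.polar q (QuadraticMap.polar q A.rep C.rep • B.rep
        - QuadraticMap.polar q A.rep B.rep • C.rep) A.rep = 0 := by
      rw [QuadraticMap.polar_sub_left, QuadraticMap.polar_smul_left,
        QuadraticMap.polar_smul_left, QuadraticMap.polar_comm q B.rep A.rep,
        QuadraticMap.polar_comm q C.rep A.rep]
      simp only [smul_eq_mul]; ring
    have hs2 : QuadraticMap.polar q (QuadraticMap.polar q A.rep C.rep • B.rep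
        - QuadraticMap.polar q A.rep B.rep • C.rep) B.rep = 0 := by
      rw [QuadraticMap.polar_sub_left, QuadraticMap.polar_smul_left,
        QuadraticMap.polar_smul_left, polBB, QuadraticMap.polar_comm q C.rep B.rep, h0]
      simp only [smul_eq_mul]; ring
    have hs3 : QuadraticMap.polar q (QuadraticMap.polar q A.rep C.rep • B.rep
        - QuadraticMap.polar q A.rep B.rep • C.rep) C.rep = 0 := by
      rw [QuadraticMap.polar_sub_left, QuadraticMap.polar_smul_left,
        QuadraticMap.polar_smul_left, polCC, h0]
      simp only [smul_eq_mul]; ring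
    have hm := keyN _ hs1 hs2 hs3
    have hm2 : (0:ℝ) • A.rep + QuadraticMap.polar q A.rep C.rep • B.rep
        + (-(QuadraticMap.polar q A.rep B.rep)) • C.rep = 0 := by
      rw [zero_smul, neg_smul, zero_add, ← sub_eq_add_neg]; exact hm
    obtain ⟨-, hs, ht⟩ := coefzero _ _ _ hm2
    have : A.rep = 0 := keyN A.rep polAA (by linarith) hs
    exact A.rep_nonzero this
  have hcv : QuadraticMap.polar q A.rep C.rep ≠ 0 := by
    intro h0
    have hs1 : QuadraticMap.polar q (QuadraticMap.polar q B.rep C.rep • A.rep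
        - QuadraticMap.polar q A.rep B.rep • C.rep) A.rep = 0 := by
      rw [QuadraticMap.polar_sub_left, QuadraticMap.polar_smul_left,
        QuadraticMap.polar_smul_left, polAA, QuadraticMap.polar_comm q C.rep A.rep, h0]
      simp only [smul_eq_mul]; ring
    have hs2 : QuadraticMap.polar q (QuadraticMap.polar q B.rep C.rep • A.rep
        - QuadraticMap.polar q A.rep B.rep • C.rep) B.rep = 0 := by
      rw [QuadraticMap.polar_sub_left, QuadraticMap.polar_smul_left,
        QuadraticMap.polar_smul_left, QuadraticMap.polar_comm q A.rep B.rep,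
        QuadraticMap.polar_comm q C.rep B.rep]
      simp only [smul_eq_mul]; ring
    have hs3 : QuadraticMap.polar q (QuadraticMap.polar q B.rep C.rep • A.rep
        - QuadraticMap.polar q A.rep B.rep • C.rep) C.rep = 0 := by
      rw [QuadraticMap.polar_sub_left, QuadraticMap.polar_smul_left,
        QuadraticMap.polar_smul_left, polCC, h0]
      simp only [smul_eq_mul]; ring
    have hm := keyN _ hs1 hs2 hs3
    have hm2 : QuadraticMap.polar q B.rep C.rep • A.rep + (0:ℝ) • B.rep
        + (-(QuadraticMap.polar q A.rep B.rep)) • C.rep = 0 := by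
      rw [zero_smul, neg_smul, add_zero, ← sub_eq_add_neg]; exact hm
    obtain ⟨hr, -, ht⟩ := coefzero _ _ _ hm2
    have : B.rep = 0 := keyN B.rep
      (by rw [QuadraticMap.polar_comm q B.rep A.rep]; linarith) polBB hr
    exact B.rep_nonzero this
  
  have hcw : QuadraticMap.polar q A.rep B.rep ≠ 0 := by
    intro h0
    have hs1 : QuadraticMap.polar q (QuadraticMap.polar q B.rep C.rep • A.rep
        - QuadraticMap.polar q A.rep C.rep • B.rep) A.rep = 0 := by
      rw [QuadraticMap.polar_sub_left, QuadraticMap.polar_smul_left,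
        QuadraticMap.polar_smul_left, polAA, QuadraticMap.polar_comm q B.rep A.rep, h0]
      simp only [smul_eq_mul]; ring
    have hs2 : QuadraticMap.polar q (QuadraticMap.polar q B.rep C.rep • A.rep
        - QuadraticMap.polar q A.rep C.rep • B.rep) B.rep = 0 := by
      rw [QuadraticMap.polar_sub_left, QuadraticMap.polar_smul_left,
        QuadraticMap.polar_smul_left, polBB, h0]
      simp only [smul_eq_mul]; ring
    have hs3 : QuadraticMap.polar q (QuadraticMap.polar q B.rep C.rep • A.rep
        - QuadraticMap.polar q A.rep C.rep • B.rep) C.rep = 0 := by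
      rw [QuadraticMap.polar_sub_left, QuadraticMap.polar_smul_left,
        QuadraticMap.polar_smul_left]
      simp only [smul_eq_mul]; ring
    have hm := keyN _ hs1 hs2 hs3
    have hm2 : QuadraticMap.polar q B.rep C.rep • A.rep
        + (-(QuadraticMap.polar q A.rep C.rep)) • B.rep + (0:ℝ) • C.rep = 0 := by
      rw [zero_smul, neg_smul, add_zero, ← sub_eq_add_neg]; exact hm
    obtain ⟨hr, hs, -⟩ := coefzero _ _ _ hm2
    have : C.rep = 0 := keyN C.rep
      (by rw [QuadraticMap.polar_comm q C.rep A.rep]; linarith)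
      (by rw [QuadraticMap.polar_comm q C.rep B.rep]; exact hr) polCC
    exact C.rep_nonzero this
  -- nonzero coordinates
  have coordNZ : ∀ X : Projectivization ℝ (Fin 3 → ℝ), OnConic q X → X ≠ A → X ≠ B → X ≠ C →
      (b.equivFun X.rep 0 ≠ 0 ∧ b.equivFun X.rep 1 ≠ 0 ∧ b.equivFun X.rep 2 ≠ 0) := by
    intro X hX hXA hXB hXC
    have hcX : QuadraticMap.polar q B.rep C.rep * (b.equivFun X.rep 1 * b.equivFun X.rep 2)
        + QuadraticMap.polar q A.rep C.rep * (b.equivFun X.rep 0 * b.equivFun X.rep 2)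
        + QuadraticMap.polar q A.rep B.rep * (b.equivFun X.rep 0 * b.equivFun X.rep 1) = 0 := by
      rw [← qexp]; exact hX
    have h01 : ¬ (b.equivFun X.rep 0 = 0 ∧ b.equivFun X.rep 1 = 0) := by
      rintro ⟨h0, h1⟩
      apply hXC
      have h := repr' X.rep
      rw [h0, h1, zero_smul, zero_smul, zero_add, zero_add] at h
      exact proj_eq_of_smul h
    have h02 : ¬ (b.equivFun X.rep 0 = 0 ∧ b.equivFun X.rep 2 = 0) := by
      rintro ⟨h0, h2⟩
      apply hXB
      have h := repr' X.rep
      rw [h0, h2, zero_smul, zero_smul, zero_add, add_zero] at h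
      exact proj_eq_of_smul h
    have h12 : ¬ (b.equivFun X.rep 1 = 0 ∧ b.equivFun X.rep 2 = 0) := by
      rintro ⟨h1, h2⟩
      apply hXA
      have h := repr' X.rep
      rw [h1, h2, zero_smul, zero_smul, add_zero, add_zero] at h
      exact proj_eq_of_smul h
    refine ⟨?_, ?_, ?_⟩
    · intro h0
      have hyz : QuadraticMap.polar q B.rep C.rep * (b.equivFun X.rep 1 * b.equivFun X.rep 2)
          = 0 := by
        linear_combination hcX - (QuadraticMap.polar q A.rep C.rep * b.equivFun X.rep 2
          + QuadraticMap.polar q A.rep B.rep * b.equivFun X.rep 1)*h0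
      rcases mul_eq_zero.mp hyz with h | h
      · exact hcu h
      · rcases mul_eq_zero.mp h with h' | h'
        · exact h01 ⟨h0, h'⟩
        · exact h02 ⟨h0, h'⟩
    · intro h1
      have hyz : QuadraticMap.polar q A.rep C.rep * (b.equivFun X.rep 0 * b.equivFun X.rep 2)
          = 0 := by
        linear_combination hcX - (QuadraticMap.polar q B.rep C.rep * b.equivFun X.rep 2
          + QuadraticMap.polar q A.rep B.rep * b.equivFun X.rep 0)*h1
      rcases mul_eq_zero.mp hyz with h | h
      · exact hcv h
      · rcases mul_eq_zero.mp h with h' | h'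
        · exact h01 ⟨h', h1⟩
        · exact h12 ⟨h1, h'⟩
    · intro h2
      have hyz : QuadraticMap.polar q A.rep B.rep * (b.equivFun X.rep 0 * b.equivFun X.rep 1)
          = 0 := by
        linear_combination hcX - (QuadraticMap.polar q B.rep C.rep * b.equivFun X.rep 1
          + QuadraticMap.polar q A.rep C.rep * b.equivFun X.rep 0)*h2
      rcases mul_eq_zero.mp hyz with h | h
      · exact hcw h
      · rcases mul_eq_zero.mp h with h' | h'
        · exact h02 ⟨h', h2⟩
        · exact h12 ⟨h', h2⟩
  obtain ⟨hx1, hy1, hz1⟩ := coordNZ A' hA' (hAne A' (by simp)).symm (hBne A' (by simp)).symm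
    (hCne A' (by simp)).symm
  obtain ⟨hx2, hy2, hz2⟩ := coordNZ B' hB' (hAne B' (by simp)).symm (hBne B' (by simp)).symm
    (hCne B' (by simp)).symm
  obtain ⟨hx3, hy3, hz3⟩ := coordNZ C' hC' (hAne C' (by simp)).symm (hBne C' (by simp)).symm
    (hCne C' (by simp)).symm
  -- conic equations in coordinates
  have cA' : QuadraticMap.polar q B.rep C.rep * ((b.equivFun A'.rep 1) * (b.equivFun A'.rep 2))
      + QuadraticMap.polar q A.rep C.rep * ((b.equivFun A'.rep 0) * (b.equivFun A'.rep 2))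
      + QuadraticMap.polar q A.rep B.rep * ((b.equivFun A'.rep 0) * (b.equivFun A'.rep 1)) = 0 := by rw [← qexp]; exact hA'
  have cB' : QuadraticMap.polar q B.rep C.rep * ((b.equivFun B'.rep 1) * (b.equivFun B'.rep 2))
      + QuadraticMap.polar q A.rep C.rep * ((b.equivFun B'.rep 0) * (b.equivFun B'.rep 2))
      + QuadraticMap.polar q A.rep B.rep * ((b.equivFun B'.rep 0) * (b.equivFun B'.rep 1)) = 0 := by rw [← qexp]; exact hB'
  have cC' : QuadraticMap.polar q B.rep C.rep * ((b.equivFun C'.rep 1) * (b.equivFun C'.rep 2))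
      + QuadraticMap.polar q A.rep C.rep * ((b.equivFun C'.rep 0) * (b.equivFun C'.rep 2))
      + QuadraticMap.polar q A.rep B.rep * ((b.equivFun C'.rep 0) * (b.equivFun C'.rep 1)) = 0 := by rw [← qexp]; exact hC'
  -- scalar equations from the Collin hypotheses
  have eP1 := (collin_iff b A A' P).mp hP1
  rw [sA] at eP1
  simp only [Matrix.cons_val_zero, Matrix.cons_val_one, Matrix.head_cons,
    Matrix.cons_val_two, Matrix.tail_cons] at eP1
  have EP1 : (b.equivFun A'.rep 1) * (b.equivFun P.rep 2) - (b.equivFun A'.rep 2) * (b.equivFun P.rep 1) = 0 := by linear_combination eP1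
  have eP2 := (collin_iff b B B' P).mp hP2
  rw [sB] at eP2
  simp only [Matrix.cons_val_zero, Matrix.cons_val_one, Matrix.head_cons,
    Matrix.cons_val_two, Matrix.tail_cons] at eP2
  have EP2 : (b.equivFun B'.rep 2) * (b.equivFun P.rep 0) - (b.equivFun B'.rep 0) * (b.equivFun P.rep 2) = 0 := by linear_combination eP2
  have eP3 := (collin_iff b C C' P).mp hP3
  rw [sC] at eP3
  simp only [Matrix.cons_val_zero, Matrix.cons_val_one, Matrix.head_cons,
    Matrix.cons_val_two, Matrix.tail_cons] at eP3
  have EP3 : (b.equivFun C'.rep 0) * (b.equivFun P.rep 1) - (b.equivFun C'.rep 1) * (b.equivFun P.rep 0) = 0 := by linear_combination eP3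
  have eQ1 := (collin_iff b A B' Q).mp hQ1
  rw [sA] at eQ1
  simp only [Matrix.cons_val_zero, Matrix.cons_val_one, Matrix.head_cons,
    Matrix.cons_val_two, Matrix.tail_cons] at eQ1
  have EQ1 : (b.equivFun B'.rep 1) * (b.equivFun Q.rep 2) - (b.equivFun B'.rep 2) * (b.equivFun Q.rep 1) = 0 := by linear_combination eQ1
  have eQ2 := (collin_iff b B C' Q).mp hQ2
  rw [sB] at eQ2
  simp only [Matrix.cons_val_zero, Matrix.cons_val_one, Matrix.head_cons,
    Matrix.cons_val_two, Matrix.tail_cons] at eQ2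
  have EQ2 : (b.equivFun C'.rep 2) * (b.equivFun Q.rep 0) - (b.equivFun C'.rep 0) * (b.equivFun Q.rep 2) = 0 := by linear_combination eQ2
  have eQ3 := (collin_iff b C A' Q).mp hQ3
  rw [sC] at eQ3
  simp only [Matrix.cons_val_zero, Matrix.cons_val_one, Matrix.head_cons,
    Matrix.cons_val_two, Matrix.tail_cons] at eQ3
  have EQ3 : (b.equivFun A'.rep 0) * (b.equivFun Q.rep 1) - (b.equivFun A'.rep 1) * (b.equivFun Q.rep 0) = 0 := by linear_combination eQ3
  -- P.rep and Q.rep have nonzero coordinate vectors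
  have hpv : ¬ ((b.equivFun P.rep 0) = 0 ∧ (b.equivFun P.rep 1) = 0 ∧ (b.equivFun P.rep 2) = 0) := by
    rintro ⟨h0, h1, h2⟩
    apply P.rep_nonzero
    rw [← b.equivFun.map_eq_zero_iff]
    funext j
    fin_cases j
    · simpa using h0
    · simpa using h1
    · simpa using h2
  have hqv : ¬ ((b.equivFun Q.rep 0) = 0 ∧ (b.equivFun Q.rep 1) = 0 ∧ (b.equivFun Q.rep 2) = 0) := by
    rintro ⟨h0, h1, h2⟩
    apply Q.rep_nonzero
    rw [← b.equivFun.map_eq_zero_iff]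
    funext j
    fin_cases j
    · simpa using h0
    · simpa using h1
    · simpa using h2
  obtain ⟨he1, he2, hp0, hq0, hC1, hC2, hC3⟩ := master
    (QuadraticMap.polar q B.rep C.rep) (QuadraticMap.polar q A.rep C.rep)
    (QuadraticMap.polar q A.rep B.rep)
    (b.equivFun A'.rep 0) (b.equivFun A'.rep 1) (b.equivFun A'.rep 2) (b.equivFun B'.rep 0) (b.equivFun B'.rep 1) (b.equivFun B'.rep 2) (b.equivFun C'.rep 0) (b.equivFun C'.rep 1) (b.equivFun C'.rep 2) (b.equivFun P.rep 0) (b.equivFun P.rep 1) (b.equivFun P.rep 2) (b.equivFun Q.rep 0) (b.equivFun Q.rep 1) (b.equivFun Q.rep 2)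
    hcv hx1 hy1 hz1 hx2 hy2 hz2 hx3 hy3 hz3 hpv hqv cA' cB' cC' EP1 EP2 EP3 EQ1 EQ2 EQ3
  -- the perspectivity direction A'B' is nondegenerate
  have hpne : (b.equivFun A'.rep 0) * (b.equivFun B'.rep 2) - (b.equivFun B'.rep 0) * (b.equivFun A'.rep 2) ≠ 0 := by
    intro h0
    have hxy := prop_of (QuadraticMap.polar q B.rep C.rep) (QuadraticMap.polar q A.rep C.rep)
      (QuadraticMap.polar q A.rep B.rep) (b.equivFun A'.rep 0) (b.equivFun A'.rep 1) (b.equivFun A'.rep 2) (b.equivFun B'.rep 0) (b.equivFun B'.rep 1) (b.equivFun B'.rep 2)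
      hcv hx1 hz1 hx2 hz2 cA' cB' h0
    apply hA'B'
    have hsm : (b.equivFun A'.rep 0) • B'.rep = (b.equivFun B'.rep 0) • A'.rep := by
      conv_lhs => rw [repr' B'.rep]
      conv_rhs => rw [repr' A'.rep]
      rw [smul_add, smul_add, smul_add, smul_add, smul_smul, smul_smul, smul_smul,
        smul_smul, smul_smul, smul_smul,
        show (b.equivFun A'.rep 0) * (b.equivFun B'.rep 1) = (b.equivFun B'.rep 0) * (b.equivFun A'.rep 1) by linarith,
        show (b.equivFun A'.rep 0) * (b.equivFun B'.rep 2) = (b.equivFun B'.rep 0) * (b.equivFun A'.rep 2) by linarith,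
        mul_comm (b.equivFun A'.rep 0) (b.equivFun B'.rep 0)]
    have hBrep : B'.rep = ((b.equivFun A'.rep 0)⁻¹ * (b.equivFun B'.rep 0)) • A'.rep := by
      rw [mul_smul, ← hsm, inv_smul_smul₀ hx1]
    exact (proj_eq_of_smul hBrep).symm
  -- construct R
  have hRv : (![(b.equivFun A'.rep 0)*(b.equivFun C'.rep 2), (b.equivFun C'.rep 1)*(b.equivFun A'.rep 2), (b.equivFun C'.rep 2)*(b.equivFun A'.rep 2)] : Fin 3 → ℝ) ≠ 0 := by
    intro h
    have h0 := congrFun h 0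
    simp only [Matrix.cons_val_zero, Pi.zero_apply] at h0
    exact mul_ne_zero hx1 hz3 h0
  have hrv : b.equivFun.symm ![(b.equivFun A'.rep 0)*(b.equivFun C'.rep 2), (b.equivFun C'.rep 1)*(b.equivFun A'.rep 2), (b.equivFun C'.rep 2)*(b.equivFun A'.rep 2)] ≠ 0 := by
    intro h
    apply hRv
    rw [← b.equivFun.apply_symm_apply (![(b.equivFun A'.rep 0)*(b.equivFun C'.rep 2), (b.equivFun C'.rep 1)*(b.equivFun A'.rep 2), (b.equivFun C'.rep 2)*(b.equivFun A'.rep 2)] : Fin 3 → ℝ), h,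
      map_zero]
  obtain ⟨aU, haU⟩ := Projectivization.exists_smul_eq_mk_rep ℝ _ hrv
  have hcr : b.equivFun (Projectivization.mk ℝ _ hrv).rep
      = (aU : ℝ) • ![(b.equivFun A'.rep 0)*(b.equivFun C'.rep 2), (b.equivFun C'.rep 1)*(b.equivFun A'.rep 2), (b.equivFun C'.rep 2)*(b.equivFun A'.rep 2)] := by
    rw [← haU, Units.smul_def, map_smul, LinearEquiv.apply_symm_apply]
  refine ⟨Projectivization.mk ℝ _ hrv, ?_, ?_, ?_, ?_⟩
  · -- Collin P Q R
    refine Fintype.not_linearIndependent_iff.mpr ⟨![(aU : ℝ) * ((b.equivFun B'.rep 2)*(b.equivFun C'.rep 2)*((b.equivFun C'.rep 0)*(b.equivFun A'.rep 2)-(b.equivFun A'.rep 0)*(b.equivFun C'.rep 2))*((b.equivFun B'.rep 0)*(b.equivFun A'.rep 2))*(b.equivFun Q.rep 0)),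
      (aU : ℝ) * ((b.equivFun A'.rep 2)*(b.equivFun C'.rep 2)*((b.equivFun A'.rep 0)*(b.equivFun B'.rep 2)-(b.equivFun B'.rep 0)*(b.equivFun A'.rep 2))*((b.equivFun C'.rep 0)*(b.equivFun B'.rep 2))*(b.equivFun P.rep 0)),
      (b.equivFun A'.rep 2)*(b.equivFun B'.rep 2)*((b.equivFun B'.rep 0)*(b.equivFun C'.rep 2)-(b.equivFun C'.rep 0)*(b.equivFun B'.rep 2))*(b.equivFun P.rep 0)*(b.equivFun Q.rep 0)], ?_, 1, ?_⟩
    · rw [Fin.sum_univ_three]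
      simp only [Matrix.cons_val_zero, Matrix.cons_val_one, Matrix.head_cons,
        Matrix.cons_val_two, Matrix.tail_cons]
      rw [← b.equivFun.map_eq_zero_iff, map_add, map_add, map_smul, map_smul, map_smul, hcr]
      have S0 : ((aU : ℝ) * ((b.equivFun B'.rep 2)*(b.equivFun C'.rep 2)*((b.equivFun C'.rep 0)*(b.equivFun A'.rep 2)-(b.equivFun A'.rep 0)*(b.equivFun C'.rep 2))*((b.equivFun B'.rep 0)*(b.equivFun A'.rep 2))*(b.equivFun Q.rep 0))) * b.equivFun P.rep 0 + ((aU : ℝ) * ((b.equivFun A'.rep 2)*(b.equivFun C'.rep 2)*((b.equivFun A'.rep 0)*(b.equivFun B'.rep 2)-(b.equivFun B'.rep 0)*(b.equivFun A'.rep 2))*((b.equivFun C'.rep 0)*(b.equivFun B'.rep 2))*(b.equivFun P.rep 0))) * b.equivFun Q.rep 0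
          + ((b.equivFun A'.rep 2)*(b.equivFun B'.rep 2)*((b.equivFun B'.rep 0)*(b.equivFun C'.rep 2)-(b.equivFun C'.rep 0)*(b.equivFun B'.rep 2))*(b.equivFun P.rep 0)*(b.equivFun Q.rep 0)) * ((aU : ℝ) * ((b.equivFun A'.rep 0)*(b.equivFun C'.rep 2))) = 0 := by
        linear_combination (aU : ℝ) * hC1
      have S1 : ((aU : ℝ) * ((b.equivFun B'.rep 2)*(b.equivFun C'.rep 2)*((b.equivFun C'.rep 0)*(b.equivFun A'.rep 2)-(b.equivFun A'.rep 0)*(b.equivFun C'.rep 2))*((b.equivFun B'.rep 0)*(b.equivFun A'.rep 2))*(b.equivFun Q.rep 0))) * b.equivFun P.rep 1 + ((aU : ℝ) * ((b.equivFun A'.rep 2)*(b.equivFun C'.rep 2)*((b.equivFun A'.rep 0)*(b.equivFun B'.rep 2)-(b.equivFun B'.rep 0)*(b.equivFun A'.rep 2))*((b.equivFun C'.rep 0)*(b.equivFun B'.rep 2))*(b.equivFun P.rep 0))) * b.equivFun Q.rep 1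
          + ((b.equivFun A'.rep 2)*(b.equivFun B'.rep 2)*((b.equivFun B'.rep 0)*(b.equivFun C'.rep 2)-(b.equivFun C'.rep 0)*(b.equivFun B'.rep 2))*(b.equivFun P.rep 0)*(b.equivFun Q.rep 0)) * ((aU : ℝ) * ((b.equivFun C'.rep 1)*(b.equivFun A'.rep 2))) = 0 := by
        linear_combination (aU : ℝ) * hC2
      have S2 : ((aU : ℝ) * ((b.equivFun B'.rep 2)*(b.equivFun C'.rep 2)*((b.equivFun C'.rep 0)*(b.equivFun A'.rep 2)-(b.equivFun A'.rep 0)*(b.equivFun C'.rep 2))*((b.equivFun B'.rep 0)*(b.equivFun A'.rep 2))*(b.equivFun Q.rep 0))) * b.equivFun P.rep 2 + ((aU : ℝ) * ((b.equivFun A'.rep 2)*(b.equivFun C'.rep 2)*((b.equivFun A'.rep 0)*(b.equivFun B'.rep 2)-(b.equivFun B'.rep 0)*(b.equivFun A'.rep 2))*((b.equivFun C'.rep 0)*(b.equivFun B'.rep 2))*(b.equivFun P.rep 0))) * b.equivFun Q.rep 2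
          + ((b.equivFun A'.rep 2)*(b.equivFun B'.rep 2)*((b.equivFun B'.rep 0)*(b.equivFun C'.rep 2)-(b.equivFun C'.rep 0)*(b.equivFun B'.rep 2))*(b.equivFun P.rep 0)*(b.equivFun Q.rep 0)) * ((aU : ℝ) * ((b.equivFun C'.rep 2)*(b.equivFun A'.rep 2))) = 0 := by
        linear_combination (aU : ℝ) * hC3
      funext j
      fin_cases j
      · simpa using S0
      · simpa using S1
      · simpa using S2
    · simp only [Matrix.cons_val_one, Matrix.head_cons]
      exact mul_ne_zero aU.ne_zero (mul_ne_zero (mul_ne_zero (mul_ne_zero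
        (mul_ne_zero hz1 hz3) hpne) (mul_ne_zero hx3 hz2)) hp0)
  · -- Collin A C' R
    rw [collin_iff b, sA, hcr]
    simp only [Matrix.cons_val_zero, Matrix.cons_val_one, Matrix.head_cons,
      Matrix.cons_val_two, Matrix.tail_cons, Pi.smul_apply, smul_eq_mul]
    ring
  · -- Collin B A' R
    rw [collin_iff b, sB, hcr]
    simp only [Matrix.cons_val_zero, Matrix.cons_val_one, Matrix.head_cons,
      Matrix.cons_val_two, Matrix.tail_cons, Pi.smul_apply, smul_eq_mul]
    ring
  · -- Collin C B' R
    rw [collin_iff b, sC, hcr]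
    simp only [Matrix.cons_val_zero, Matrix.cons_val_one, Matrix.head_cons,
      Matrix.cons_val_two, Matrix.tail_cons, Pi.smul_apply, smul_eq_mul]
    linear_combination (-(aU : ℝ))*he1 - (aU : ℝ)*he2
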